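/- Let C be a commutative K-algebra that is formally smooth over K, and let A be a commutative K[[ℏ]]-algebra that is flat over K[[ℏ]] and ℏ-adically complete, together with a K-algebra isomorphism ψ : A/ℏA → C. Then there exists an isomorphism of K[[ℏ]]-algebras Φ : C[[ℏ]] → A (where C[[ℏ]] is the power series algebra over C with its natural K[[ℏ]]-algebra structure) such that the composite of Φ with the projection A → A/ℏA and with ψ equals the map C[[ℏ]] → C given by reduction modulo ℏ. -/

import Mathlib

noncomputable section

universe u v

/-- Cross-universe square-zero lifting for formally smooth algebras. -/
theorem exists_lift_of_sq_zero {K : Type u} [CommRing K] {C : Type u} [CommRing C]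
    [Algebra K C] [Algebra.FormallySmooth K C] {B : Type v} [CommRing B] [Algebra K B]
    (J : Ideal B) (hJ : J ^ 2 = ⊥) (g : C →ₐ[K] B ⧸ J) :
    ∃ s : C →ₐ[K] B, ∀ c, Ideal.Quotient.mk J (s c) = g c := by
  classical
  set f : MvPolynomial C K →ₐ[K] C := MvPolynomial.aeval id with hf_def
  have hf : Function.Surjective f := fun c => ⟨MvPolynomial.X c, by simp [hf_def]⟩
  obtain ⟨sec, hsec⟩ := (Algebra.FormallySmooth.iff_split_surjection f hf).mp inferInstance
  choose pick hpick using fun c : C => Ideal.Quotient.mk_surjective (I := J) (g c)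
  set h : MvPolynomial C K →ₐ[K] B := MvPolynomial.aeval pick with hh_def
  have hcomm : ∀ p, Ideal.Quotient.mk J (h p) = g (f p) := by
    have : (Ideal.Quotient.mkₐ K J).comp h = g.comp f := by
      apply MvPolynomial.algHom_ext
      intro c
      simp [hh_def, hf_def, hpick]
    intro p
    simpa using congrArg (fun F => F p) (congrArg DFunLike.coe this)
  have hker : ∀ p ∈ RingHom.ker f.toRingHom ^ 2, h p = 0 := by
    intro p hp
    have h1 : Ideal.map h (RingHom.ker f.toRingHom) ≤ J := by
      rw [Ideal.map_le_iff_le_comap]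
      intro x hx
      have : g (f x) = 0 := by
        rw [show f x = 0 from hx, map_zero]
      rw [Ideal.mem_comap]
      rw [← hcomm x] at this
      exact Ideal.Quotient.eq_zero_iff_mem.mp this
    have h2 : h p ∈ Ideal.map h (RingHom.ker f.toRingHom ^ 2) :=
      Ideal.mem_map_of_mem h hp
    rw [pow_two, Ideal.map_mul] at h2
    have h3 : Ideal.map h (RingHom.ker f.toRingHom) * Ideal.map h (RingHom.ker f.toRingHom)
        ≤ J * J := Ideal.mul_mono h1 h1
    have h4 := h3 h2
    rw [← pow_two, hJ] at h4
    simpa using h4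
  refine ⟨(Ideal.Quotient.liftₐ _ h hker).comp sec, fun c => ?_⟩
  obtain ⟨p, hp⟩ := Ideal.Quotient.mk_surjective (I := RingHom.ker f.toRingHom ^ 2) (sec c)
  have key : Ideal.Quotient.mk J ((Ideal.Quotient.liftₐ _ h hker) (sec c))
      = g (f.kerSquareLift (sec c)) := by
    rw [← hp]
    have e1 : (Ideal.Quotient.liftₐ (RingHom.ker f.toRingHom ^ 2) h hker)
        (Ideal.Quotient.mk _ p) = h p := by
      rw [Ideal.Quotient.liftₐ_apply]
      exact Ideal.Quotient.lift_mk _ _ _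
    have e2 : f.kerSquareLift (Ideal.Quotient.mk _ p) = f p := rfl
    rw [e1, e2, hcomm]
  rw [AlgHom.comp_apply, key]
  have h5 : f.kerSquareLift (sec c) = c := by
    have := congrArg (fun F => F c) (congrArg DFunLike.coe hsec)
    exact this
  rw [h5]

namespace Statement13Aux

variable (K : Type u) [Field K]
variable (C : Type u) [CommRing C] [Algebra K C] [Algebra.FormallySmooth K C]
variable (A : Type v) [CommRing A] [Algebra (PowerSeries K) A]
  [Algebra K A] [IsScalarTower K (PowerSeries K) A]

/-- ℏ as an element of `A`. -/
abbrev hbar : A := algebraMap (PowerSeries K) A PowerSeries.X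

/-- the ideal `(ℏ) ⊆ A`. -/
abbrev Ih : Ideal A := Ideal.span {hbar K A}

set_option linter.unusedSectionVars false in
lemma sq_zero_aux (n : ℕ) :
    ((Ih K A ^ (n + 1)).map (Ideal.Quotient.mkₐ K (Ih K A ^ (n + 1 + 1)))) ^ 2 = ⊥ := by
  rw [pow_two, ← Ideal.map_mul, ← pow_add]
  have h1 : Ih K A ^ (n + 1 + (n + 1)) ≤ Ih K A ^ (n + 1 + 1) :=
    Ideal.pow_le_pow_right (by omega)
  refine le_bot_iff.mp (Ideal.map_le_iff_le_comap.mpr fun x hx => ?_)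
  simp only [Ideal.mem_comap, Ideal.Quotient.mkₐ_eq_mk, Ideal.mem_bot]
  exact Ideal.Quotient.eq_zero_iff_mem.mpr (h1 hx)

variable (ψ : (A ⧸ Ideal.span {algebraMap (PowerSeries K) A PowerSeries.X}) ≃ₐ[K] C)

/-- compatible system of lifts `C → A/ℏ^(n+1)`. -/
def sigmaAux : (n : ℕ) → (C →ₐ[K] A ⧸ (Ih K A ^ (n + 1)))
  | 0 => ((Ideal.quotientEquivAlgOfEq K
      (show Ih K A = Ih K A ^ (0 + 1) by rw [pow_one])).toAlgHom).comp ψ.symm.toAlgHom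
  | (n + 1) => (exists_lift_of_sq_zero _ (sq_zero_aux K A n)
      (((DoubleQuot.quotQuotEquivQuotOfLEₐ K
          (Ideal.pow_le_pow_right (Nat.le_succ (n + 1)) :
            Ih K A ^ (n + 1 + 1) ≤ Ih K A ^ (n + 1))).symm.toAlgHom).comp
        (sigmaAux n))).choose

lemma sigmaAux_zero_spec (c : C) (a : A)
    (h : Ideal.Quotient.mk (Ih K A ^ (0 + 1)) a = sigmaAux K C A ψ 0 c) :
    ψ (Ideal.Quotient.mk (Ideal.span {algebraMap (PowerSeries K) A PowerSeries.X}) a) = c := by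
  rw [sigmaAux] at h
  have he : (Ideal.quotientEquivAlgOfEq K
        (show Ih K A = Ih K A ^ (0 + 1) by rw [pow_one]))
      (Ideal.Quotient.mk (Ih K A) a) = Ideal.Quotient.mk (Ih K A ^ (0 + 1)) a :=
    Ideal.quotientEquivAlgOfEq_mk K _ _
  rw [← he] at h
  have h2 := (Ideal.quotientEquivAlgOfEq K
      (show Ih K A = Ih K A ^ (0 + 1) by rw [pow_one])).injective
      (h.trans (by rfl) : _)
  have h3 : Ideal.Quotient.mk (Ih K A) a = ψ.symm c := h2
  rw [h3, AlgEquiv.apply_symm_apply]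

lemma sigmaAux_compat (n : ℕ) (c : C) (a : A)
    (h : Ideal.Quotient.mk (Ih K A ^ (n + 1 + 1)) a = sigmaAux K C A ψ (n + 1) c) :
    Ideal.Quotient.mk (Ih K A ^ (n + 1)) a = sigmaAux K C A ψ n c := by
  have hle : Ih K A ^ (n + 1 + 1) ≤ Ih K A ^ (n + 1) := Ideal.pow_le_pow_right (Nat.le_succ _)
  have h2 := (exists_lift_of_sq_zero _ (sq_zero_aux K A n)
      (((DoubleQuot.quotQuotEquivQuotOfLEₐ K hle).symm.toAlgHom).comp
        (sigmaAux K C A ψ n))).choose_spec c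
  rw [show (exists_lift_of_sq_zero _ (sq_zero_aux K A n)
      (((DoubleQuot.quotQuotEquivQuotOfLEₐ K hle).symm.toAlgHom).comp
        (sigmaAux K C A ψ n))).choose c = sigmaAux K C A ψ (n + 1) c from rfl, ← h] at h2
  have h3 := congrArg (DoubleQuot.quotQuotEquivQuotOfLEₐ K hle) h2
  simp only [AlgHom.coe_comp, Function.comp_apply, AlgEquiv.toAlgHom_eq_coe,
    AlgHom.coe_coe, AlgEquiv.apply_symm_apply] at h3
  refine Eq.trans ?_ (h3.trans ((DoubleQuot.quotQuotEquivQuotOfLEₐ K hle).apply_symm_apply _))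
  rfl

lemma sigmaAux_compat' {m n : ℕ} (hmn : m ≤ n) (c : C) (a : A)
    (h : Ideal.Quotient.mk (Ih K A ^ (n + 1)) a = sigmaAux K C A ψ n c) :
    Ideal.Quotient.mk (Ih K A ^ (m + 1)) a = sigmaAux K C A ψ m c := by
  induction n with
  | zero =>
    have hm : m = 0 := by omega
    subst hm; exact h
  | succ k ih =>
    rcases Nat.lt_or_ge m (k + 1) with h' | h'
    · exact ih (by omega) (sigmaAux_compat K C A ψ k c a h)
    · have : m = k + 1 := by omega
      subst this; exact h

end Statement13Aux

set_option maxHeartbeats 4000000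

/-- let `C` be a formally smooth commutative `K`-algebra and `A` a
commutative `K[[ℏ]]`-algebra, flat and `ℏ`-adically complete, with a `K`-algebra
isomorphism `ψ : A/ℏA ≃ C`.  Then there is a `K[[ℏ]]`-algebra isomorphism
`Φ : C[[ℏ]] ≃ A` compatible with `ψ` and reduction modulo `ℏ` (the latter being the
constant coefficient map `C[[ℏ]] → C`). -/
theorem statement13 (K : Type u) [Field K] [CharZero K]
    (C : Type u) [CommRing C] [Algebra K C] [Algebra.FormallySmooth K C]
    (A : Type v) [CommRing A] [Algebra (PowerSeries K) A]
    [Algebra K A] [IsScalarTower K (PowerSeries K) A]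
    [Module.Flat (PowerSeries K) A]
    [IsAdicComplete (Ideal.span {(PowerSeries.X : PowerSeries K)}) A]
    (ψ : (A ⧸ Ideal.span {algebraMap (PowerSeries K) A PowerSeries.X}) ≃ₐ[K] C) :
    ∃ Φ : PowerSeries C ≃ₐ[PowerSeries K] A,
      ∀ f : PowerSeries C,
        ψ (Ideal.Quotient.mk (Ideal.span {algebraMap (PowerSeries K) A PowerSeries.X})
            (Φ f))
          = (PowerSeries.constantCoeff : PowerSeries C →+* C) f := by
  classical
  let R := PowerSeries K
  let hb : A := algebraMap R A PowerSeries.X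
  let I : Ideal A := Ideal.span {hb}
  let J : Ideal R := Ideal.span {(PowerSeries.X : R)}
  have hI : I = Ideal.span {hb} := rfl
  have hJ : J = Ideal.span {(PowerSeries.X : R)} := rfl
  -- membership in I^n
  have hIn : ∀ (n : ℕ) (x : A), x ∈ I ^ n ↔ hb ^ n ∣ x := by
    intro n x
    rw [hI, Ideal.span_singleton_pow, Ideal.mem_span_singleton]
  -- I^n as a submodule
  have hmem : ∀ (n : ℕ) (x : A), x ∈ (J ^ n • ⊤ : Submodule R A) ↔ x ∈ I ^ n := by
    intro n x
    constructor
    · intro hx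
      refine Submodule.smul_induction_on hx (fun r hr m _ => ?_) (fun y z hy hz => ?_)
      · rw [hJ, Ideal.span_singleton_pow, Ideal.mem_span_singleton] at hr
        obtain ⟨s, rfl⟩ := hr
        rw [hIn]
        refine ⟨algebraMap R A s * m, ?_⟩
        rw [Algebra.smul_def, map_mul, map_pow]
        ring
      · exact Ideal.add_mem _ hy hz
    · intro hx
      rw [hIn] at hx
      obtain ⟨y, rfl⟩ := hx
      have : hb ^ n * y = (PowerSeries.X ^ n : R) • y := by
        rw [Algebra.smul_def, map_pow]
      rw [this]
      exact Submodule.smul_mem_smul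
        (by rw [hJ, Ideal.span_singleton_pow]; exact Ideal.subset_span rfl) trivial
  -- Hausdorff : elements in all I^n vanish
  have hzero : ∀ x : A, (∀ n, x ∈ I ^ n) → x = 0 := by
    intro x hx
    refine IsHausdorff.haus (I := J) inferInstance x fun n => ?_
    rw [SModEq.sub_mem, sub_zero]
    exact (hmem n x).mpr (hx n)
  have hdiff : ∀ x y : A, (∀ n, x - y ∈ I ^ n) → x = y := by
    intro x y h
    exact sub_eq_zero.mp (hzero (x - y) h)
  -- precompleteness
  have hprec : ∀ g : ℕ → A, (∀ m n, m ≤ n → g n - g m ∈ I ^ m) →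
      ∃ L : A, ∀ n, L - g n ∈ I ^ n := by
    intro g hg
    obtain ⟨L, hL⟩ := IsPrecomplete.prec (I := J) inferInstance
      (f := g) (by
        intro m n hmn
        rw [SModEq.sub_mem]
        exact (hmem m _).mpr ((by simpa [neg_sub] using neg_mem (hg m n hmn) : g m - g n ∈ I ^ m)))
    exact ⟨L, fun n => by
      have := hL n
      rw [SModEq.sub_mem] at this
      have := (hmem n _).mp this
      simpa [neg_sub] using neg_mem this⟩
  -- regularity of hb
  have hreg : ∀ x : A, hb * x = 0 → x = 0 := by
    have hX : IsSMulRegular R (PowerSeries.X : R) := by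
      intro x y hxy
      simp only [smul_eq_mul] at hxy
      exact mul_left_cancel₀ PowerSeries.X_ne_zero hxy
    have hA : IsSMulRegular A (PowerSeries.X : R) :=
      ((TensorProduct.lid R A).isSMulRegular_congr (PowerSeries.X : R)).mp (hX.rTensor A)
    intro x hx
    have h0 : (PowerSeries.X : R) • x = (PowerSeries.X : R) • (0 : A) := by
      rw [Algebra.smul_def, smul_zero]
      exact hx
    exact hA h0
  -- the multiplicative section σ0 of ψ ∘ mk
  have hex : ∀ c : C, ∃ a : A, ∀ n,
      Ideal.Quotient.mk (I ^ (n + 1)) a = Statement13Aux.sigmaAux K C A ψ n c := by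
    intro c
    choose lift hlift using fun n =>
      Ideal.Quotient.mk_surjective (I := I ^ (n + 1)) (Statement13Aux.sigmaAux K C A ψ n c)
    obtain ⟨L, hL⟩ := hprec lift (by
      intro m n hmn
      have h1 : Ideal.Quotient.mk (I ^ (m + 1)) (lift n) = Statement13Aux.sigmaAux K C A ψ m c :=
        Statement13Aux.sigmaAux_compat' K C A ψ hmn c (lift n) (hlift n)
      have h2 : lift n - lift m ∈ I ^ (m + 1) := by
        rw [← Ideal.Quotient.eq]
        rw [h1, hlift m]
      exact Ideal.pow_le_pow_right (Nat.le_succ m) h2)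
    refine ⟨L, fun n => ?_⟩
    have h1 : L - lift (n + 1) ∈ I ^ (n + 1) := hL (n + 1)
    have h2 : Ideal.Quotient.mk (I ^ (n + 1)) (lift (n + 1))
        = Statement13Aux.sigmaAux K C A ψ n c :=
      Statement13Aux.sigmaAux_compat' K C A ψ (Nat.le_succ n) c (lift (n + 1)) (hlift (n + 1))
    rw [← h2, Ideal.Quotient.eq]
    exact h1
  choose σ0 hσ0 using hex
  have hmkeq : ∀ x y : A, (∀ n, Ideal.Quotient.mk (I ^ (n + 1)) x
      = Ideal.Quotient.mk (I ^ (n + 1)) y) → x = y := by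
    intro x y h
    refine hdiff x y fun n => ?_
    rcases n with _ | m
    · simp [pow_zero, Ideal.one_eq_top]
    · exact (Ideal.Quotient.eq).mp (h m)
  -- σ0 is a ψ⁻¹-lift
  have hψσ : ∀ c : C, ψ (Ideal.Quotient.mk I (σ0 c)) = c := by
    intro c
    exact Statement13Aux.sigmaAux_zero_spec K C A ψ c (σ0 c) (hσ0 c 0)
  -- ring hom structure of σ0
  have σadd : ∀ c c', σ0 (c + c') = σ0 c + σ0 c' := by
    intro c c'
    refine hmkeq _ _ fun n => ?_
    rw [map_add, hσ0, hσ0, hσ0, map_add]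
  have σmul : ∀ c c', σ0 (c * c') = σ0 c * σ0 c' := by
    intro c c'
    refine hmkeq _ _ fun n => ?_
    rw [map_mul, hσ0, hσ0, hσ0, map_mul]
  have σone : σ0 1 = 1 := by
    refine hmkeq _ _ fun n => ?_
    rw [hσ0, map_one, map_one]
  have σzero : σ0 0 = 0 := by
    refine hmkeq _ _ fun n => ?_
    rw [hσ0, map_zero, map_zero]
  have σalgmap : ∀ k : K, σ0 (algebraMap K C k) = algebraMap K A k := by
    intro k
    refine hmkeq _ _ fun n => ?_
    rw [hσ0]
    have h1 := (Statement13Aux.sigmaAux K C A ψ n).commutes k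
    rw [h1]
    rw [IsScalarTower.algebraMap_apply K A (A ⧸ I ^ (n + 1))]
    rfl
  let σ : C →+* A :=
    { toFun := σ0, map_one' := σone, map_mul' := σmul, map_zero' := σzero,
      map_add' := σadd }
  -- approximations
  let S : ℕ → PowerSeries C → A :=
    fun n f => Polynomial.eval₂ σ hb (PowerSeries.trunc n f)
  have hSdef : ∀ n f, S n f = Polynomial.eval₂ σ hb (PowerSeries.trunc n f) :=
    fun n f => rfl
  have hS_mem : ∀ (n : ℕ) (p : Polynomial C), (∀ i < n, p.coeff i = 0) →
      Polynomial.eval₂ σ hb p ∈ I ^ n := by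
    intro n p hp
    rw [Polynomial.eval₂_eq_sum, Polynomial.sum]
    refine Ideal.sum_mem _ fun i _ => ?_
    rcases lt_or_ge i n with h | h
    · rw [hp i h, map_zero, zero_mul]
      exact Ideal.zero_mem _
    · rw [hIn]
      exact Dvd.dvd.mul_left (pow_dvd_pow hb h) _
  have hScauchy : ∀ (f : PowerSeries C) (m n : ℕ), m ≤ n → S n f - S m f ∈ I ^ m := by
    intro f m n hmn
    simp only [hSdef]
    rw [← Polynomial.eval₂_sub]
    refine hS_mem m _ fun i hi => ?_
    rw [Polynomial.coeff_sub, PowerSeries.coeff_trunc, PowerSeries.coeff_trunc,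
      if_pos (lt_of_lt_of_le hi hmn), if_pos hi, sub_self]
  have hEx : ∀ f : PowerSeries C, ∃ a : A, ∀ n, a - S n f ∈ I ^ n :=
    fun f => hprec (fun n => S n f) (fun m n hmn => hScauchy f m n hmn)
  choose Φ0 hΦ0 using hEx
  have huniq : ∀ (f : PowerSeries C) (a : A), (∀ n, a - S n f ∈ I ^ n) → a = Φ0 f := by
    intro f a ha
    refine hdiff a (Φ0 f) fun n => ?_
    have := Ideal.sub_mem _ (ha n) (hΦ0 f n)
    simpa using this
  -- ring hom structure of Φ0
  have Φadd : ∀ f g, Φ0 (f + g) = Φ0 f + Φ0 g := by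
    intro f g
    refine (huniq _ _ fun n => ?_).symm
    have hS : S n (f + g) = S n f + S n g := by
      simp only [hSdef]
      rw [map_add, Polynomial.eval₂_add]
    rw [hS]
    have : Φ0 f + Φ0 g - (S n f + S n g) = (Φ0 f - S n f) + (Φ0 g - S n g) := by ring
    rw [this]
    exact Ideal.add_mem _ (hΦ0 f n) (hΦ0 g n)
  have Φmul : ∀ f g, Φ0 (f * g) = Φ0 f * Φ0 g := by
    intro f g
    refine (huniq _ _ fun n => ?_).symm
    have key1 : Φ0 f * Φ0 g - S n f * S n g =
        Φ0 f * (Φ0 g - S n g) + (Φ0 f - S n f) * S n g := by ring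
    have mem1 : Φ0 f * Φ0 g - S n f * S n g ∈ I ^ n := by
      rw [key1]
      exact Ideal.add_mem _ (Ideal.mul_mem_left _ _ (hΦ0 g n))
        (Ideal.mul_mem_right _ _ (hΦ0 f n))
    have mem2 : S n f * S n g - S n (f * g) ∈ I ^ n := by
      simp only [hSdef]
      rw [← Polynomial.eval₂_mul, ← Polynomial.eval₂_sub]
      refine hS_mem n _ fun i hi => ?_
      rw [Polynomial.coeff_sub]
      have e1 : (PowerSeries.trunc n f * PowerSeries.trunc n g).coeff i
          = (PowerSeries.trunc n (f * g)).coeff i := by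
        have h2 : PowerSeries.trunc n ((PowerSeries.trunc n f : PowerSeries C)
            * (PowerSeries.trunc n g : PowerSeries C)) = PowerSeries.trunc n (f * g) :=
          PowerSeries.trunc_trunc_mul_trunc f g
        calc (PowerSeries.trunc n f * PowerSeries.trunc n g).coeff i
            = PowerSeries.coeff (R := C) i ((PowerSeries.trunc n f * PowerSeries.trunc n g : Polynomial C)
                : PowerSeries C) := (Polynomial.coeff_coe _ _).symm
          _ = PowerSeries.coeff (R := C) i ((PowerSeries.trunc n f : PowerSeries C)
                * (PowerSeries.trunc n g : PowerSeries C)) := by rw [Polynomial.coe_mul]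
          _ = (PowerSeries.trunc n ((PowerSeries.trunc n f : PowerSeries C)
                * (PowerSeries.trunc n g : PowerSeries C))).coeff i := by
                rw [PowerSeries.coeff_trunc, if_pos hi]
          _ = (PowerSeries.trunc n (f * g)).coeff i := by rw [h2]
      rw [e1, sub_self]
    have := Ideal.add_mem _ mem1 mem2
    simpa using this
  have Φone : Φ0 1 = 1 := by
    refine (huniq _ _ fun n => ?_).symm
    rcases n with _ | m
    · simp [pow_zero, Ideal.one_eq_top]
    · have : S (m + 1) 1 = 1 := by
        simp only [hSdef]
        rw [PowerSeries.trunc_one, Polynomial.eval₂_one]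
      rw [this, sub_self]
      exact Ideal.zero_mem _
  have Φzero : Φ0 0 = 0 := by
    refine (huniq _ _ fun n => ?_).symm
    have : S n 0 = 0 := by
      simp only [hSdef]
      rw [map_zero, Polynomial.eval₂_zero]
    rw [this, sub_self]
    exact Ideal.zero_mem _
  -- compatibility with algebraMap R
  have hσcomp : (σ : C →+* A).comp (algebraMap K C) = algebraMap K A :=
    RingHom.ext σalgmap
  have halgRA : ∀ p : Polynomial K,
      algebraMap R A (p : PowerSeries K) = Polynomial.eval₂ (algebraMap K A) hb p := by
    intro p
    have h1 : (p : PowerSeries K) = Polynomial.eval₂ (PowerSeries.C (R := K)) PowerSeries.X p :=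
      (Polynomial.eval₂_C_X_eq_coe (φ := p)).symm
    rw [h1, Polynomial.hom_eval₂]
    congr 1
    refine RingHom.ext fun k => ?_
    have h2 : (PowerSeries.C (R := K)) k = algebraMap K R k := by
      rw [PowerSeries.algebraMap_apply]
      simp
    rw [RingHom.comp_apply, h2, ← IsScalarTower.algebraMap_apply]
  have ΦalgR : ∀ g : R, Φ0 (algebraMap R (PowerSeries C) g) = algebraMap R A g := by
    intro g
    refine (huniq _ _ fun n => ?_).symm
    have halg : algebraMap R (PowerSeries C) g = PowerSeries.map (algebraMap K C) g := rfl
    have htr : PowerSeries.trunc n (PowerSeries.map (algebraMap K C) g)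
        = (PowerSeries.trunc n g).map (algebraMap K C) := by
      refine Polynomial.ext fun i => ?_
      rw [PowerSeries.coeff_trunc, Polynomial.coeff_map, PowerSeries.coeff_trunc]
      split
      · rw [PowerSeries.coeff_map]
      · rw [map_zero]
    have hSn : S n (algebraMap R (PowerSeries C) g)
        = Polynomial.eval₂ (algebraMap K A) hb (PowerSeries.trunc n g) := by
      simp only [hSdef]
      rw [halg, htr, Polynomial.eval₂_map, hσcomp]
    rw [hSn, ← halgRA]
    have hsub : algebraMap R A g - algebraMap R A ((PowerSeries.trunc n g : Polynomial K)
        : PowerSeries K) = algebraMap R A (g - ((PowerSeries.trunc n g : Polynomial K)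
        : PowerSeries K)) := by rw [map_sub]
    rw [hsub, hIn]
    have hdvd : (PowerSeries.X : R) ^ n ∣ g - ((PowerSeries.trunc n g : Polynomial K)
        : PowerSeries K) := by
      rw [PowerSeries.X_pow_dvd_iff]
      intro m hm
      rw [map_sub, Polynomial.coeff_coe, PowerSeries.coeff_trunc, if_pos hm, sub_self]
    have := map_dvd (algebraMap R A) hdvd
    rw [map_pow] at this
    exact this
  have ΦX : Φ0 PowerSeries.X = hb := by
    refine (huniq _ _ fun n => ?_).symm
    rcases n with _ | _ | m
    · simp [pow_zero, Ideal.one_eq_top]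
    · have ht : PowerSeries.trunc 1 (PowerSeries.X : PowerSeries C) = 0 := by
        refine Polynomial.ext fun i => ?_
        rw [PowerSeries.coeff_trunc]
        split
        · next h =>
          interval_cases i
          · simp [PowerSeries.coeff_zero_X]
        · simp
      simp only [hSdef]
      rw [ht, Polynomial.eval₂_zero, sub_zero, pow_one, hI]
      exact Ideal.subset_span rfl
    · have : S (m + 2) (PowerSeries.X : PowerSeries C) = hb := by
        simp only [hSdef]
        rw [PowerSeries.trunc_X, Polynomial.eval₂_X]
      rw [this, sub_self]
      exact Ideal.zero_mem _
  -- the algebra hom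
  let Φa : PowerSeries C →ₐ[R] A :=
    { toFun := Φ0, map_one' := Φone, map_mul' := Φmul, map_zero' := Φzero,
      map_add' := Φadd, commutes' := ΦalgR }
  -- compatibility with ψ
  have hcompat : ∀ f : PowerSeries C,
      ψ (Ideal.Quotient.mk I (Φ0 f)) = PowerSeries.constantCoeff (R := C) f := by
    intro f
    have h1 : Φ0 f - S 1 f ∈ I := by
      have := hΦ0 f 1
      rwa [pow_one] at this
    have h2 : Ideal.Quotient.mk I (Φ0 f) = Ideal.Quotient.mk I (S 1 f) :=
      Ideal.Quotient.eq.mpr h1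
    have ht : PowerSeries.trunc 1 f = Polynomial.C (PowerSeries.constantCoeff (R := C) f) := by
      refine Polynomial.ext fun i => ?_
      rw [PowerSeries.coeff_trunc, Polynomial.coeff_C]
      rcases Nat.eq_zero_or_pos i with h | h
      · subst h
        simp [PowerSeries.coeff_zero_eq_constantCoeff]
      · rw [if_neg (by omega), if_neg (by omega)]
    have h3 : S 1 f = σ0 (PowerSeries.constantCoeff (R := C) f) := by
      simp only [hSdef]
      rw [ht, Polynomial.eval₂_C]
      rfl
    rw [h2, h3, hψσ]
  -- injectivity
  have hker : ∀ f : PowerSeries C, Φ0 f = 0 → f = 0 := by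
    have hco : ∀ (n : ℕ) (f : PowerSeries C), Φ0 f = 0 → PowerSeries.coeff (R := C) n f = 0 := by
      intro n
      induction n with
      | zero =>
        intro f hf
        have := hcompat f
        rw [hf, map_zero, map_zero] at this
        rw [PowerSeries.coeff_zero_eq_constantCoeff]
        exact this.symm
      | succ k ih =>
        intro f hf
        have h0 : PowerSeries.constantCoeff (R := C) f = 0 := by
          have := hcompat f
          rw [hf, map_zero, map_zero] at this
          exact this.symm
        obtain ⟨g, rfl⟩ := PowerSeries.X_dvd_iff.mpr h0
        rw [PowerSeries.coeff_succ_X_mul]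
        refine ih g ?_
        have h1 : Φ0 (PowerSeries.X * g) = hb * Φ0 g := by
          rw [Φmul, ΦX]
        rw [hf] at h1
        exact hreg _ h1.symm
    intro f hf
    exact PowerSeries.ext fun n => by rw [hco n f hf, map_zero]
  have hinj : Function.Injective Φ0 := by
    intro f g h
    have : Φ0 (f - g) = 0 := by
      have h2 := Φadd (f - g) g
      rw [sub_add_cancel] at h2
      have hsub : Φ0 (f - g) = Φ0 f - Φ0 g := by rw [h2]; ring
      rw [hsub, h, sub_self]
    exact sub_eq_zero.mp (hker _ this)
  -- surjectivity
  have hsurj : Function.Surjective Φ0 := by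
    intro a
    have hnext : ∀ x : A, ∃ b : A, x - σ0 (ψ (Ideal.Quotient.mk I x)) = hb * b := by
      intro x
      have h1 : Ideal.Quotient.mk I (σ0 (ψ (Ideal.Quotient.mk I x)))
          = Ideal.Quotient.mk I x := by
        have := hψσ (ψ (Ideal.Quotient.mk I x))
        exact ψ.injective (by rw [this])
      have h2 : x - σ0 (ψ (Ideal.Quotient.mk I x)) ∈ I :=
        Ideal.Quotient.eq.mp h1.symm
      exact Ideal.mem_span_singleton.mp h2
    choose next hnextp using hnext
    let gs : ℕ → A := fun n => next^[n] a
    let f : PowerSeries C := PowerSeries.mk fun i => ψ (Ideal.Quotient.mk I (gs i))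
    have hgs : ∀ n, gs n = next^[n] a := fun n => rfl
    have hf : f = PowerSeries.mk fun i => ψ (Ideal.Quotient.mk I (gs i)) := rfl
    have key : ∀ n, a - S n f = hb ^ n * gs n := by
      intro n
      induction n with
      | zero =>
        have h0 : S 0 f = 0 := by
          simp only [hSdef]
          rw [PowerSeries.trunc_zero', Polynomial.eval₂_zero]
        rw [h0, pow_zero, one_mul, hgs]
        simp
      | succ k ihk =>
        have hstep : S (k + 1) f = S k f + σ0 (PowerSeries.coeff (R := C) k f) * hb ^ k := by
          simp only [hSdef]
          rw [PowerSeries.trunc_succ, Polynomial.eval₂_add, Polynomial.eval₂_monomial]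
          rfl
        have hcoeff : PowerSeries.coeff (R := C) k f = ψ (Ideal.Quotient.mk I (gs k)) := by
          rw [hf, PowerSeries.coeff_mk]
        have hit : gs (k + 1) = next (gs k) := by
          rw [hgs]
          exact Function.iterate_succ_apply' next k a
        calc a - S (k + 1) f = (a - S k f) - σ0 (PowerSeries.coeff (R := C) k f) * hb ^ k := by
              rw [hstep]; ring
          _ = hb ^ k * gs k - σ0 (ψ (Ideal.Quotient.mk I (gs k))) * hb ^ k := by
              rw [ihk, hcoeff]
          _ = hb ^ k * (gs k - σ0 (ψ (Ideal.Quotient.mk I (gs k)))) := by ring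
          _ = hb ^ k * (hb * next (gs k)) := by rw [hnextp (gs k)]
          _ = hb ^ (k + 1) * gs (k + 1) := by rw [hit]; ring
    refine ⟨f, ?_⟩
    refine (huniq f a fun n => ?_).symm
    rw [key n, hIn]
    exact Dvd.intro _ rfl
  refine ⟨AlgEquiv.ofBijective Φa ⟨hinj, hsurj⟩, fun f => hcompat f⟩
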